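/- Let σ₂ = diag(e^{πi/n}, e^{−πi/n}) with n ≥ 2, and let σ₃ ∈ SU(2) satisfy σ₃ · conj(σ₃) = I and (σ₂ · conj(σ₃))² = −I. Then σ₃ = i·[[α e^{πi/n}, β],[β, −α e^{−πi/n}]] for some real α, β with α² + β² = 1. -/

import Mathlib

open Matrix Complex

theorem stmt13 (n : ℕ) (hn : 2 ≤ n)
    (σ₂ σ₃ : Matrix (Fin 2) (Fin 2) ℂ)
    (hσ₂ : σ₂ = !![Complex.exp ((Real.pi : ℂ) * Complex.I / n), 0;
        0, Complex.exp (-((Real.pi : ℂ) * Complex.I / n))])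
    (hdet : σ₃.det = 1) (hu : σ₃ᴴ * σ₃ = 1)
    (hc : σ₃ * σ₃.map (starRingEnd ℂ) = 1)
    (h : (σ₂ * σ₃.map (starRingEnd ℂ)) ^ 2 = -1) :
    ∃ α β : ℝ, α ^ 2 + β ^ 2 = 1 ∧
      σ₃ = Complex.I • !![(α : ℂ) * Complex.exp ((Real.pi : ℂ) * Complex.I / n), (β : ℂ);
        (β : ℂ), -((α : ℂ) * Complex.exp (-((Real.pi : ℂ) * Complex.I / n)))] := by
  obtain ⟨a, b, c, d, hσ₃⟩ : ∃ a b c d, σ₃ = !![a, b; c, d] :=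
    ⟨σ₃ 0 0, σ₃ 0 1, σ₃ 1 0, σ₃ 1 1, by
      ext i j; fin_cases i <;> fin_cases j <;> simp⟩
  subst hσ₃ hσ₂
  set ω : ℂ := Complex.exp ((Real.pi : ℂ) * Complex.I / n) with hω
  set ω' : ℂ := Complex.exp (-((Real.pi : ℂ) * Complex.I / n)) with hω'
  have hωω' : ω * ω' = 1 := by
    rw [hω, hω', ← Complex.exp_add, add_neg_cancel, Complex.exp_zero]
  have hωc : (starRingEnd ℂ) ω = ω' := by
    rw [hω, hω', ← Complex.exp_conj]
    congr 1
    simp [map_div₀, Complex.conj_I]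
    ring
  have hωc' : (starRingEnd ℂ) ω' = ω := by
    rw [← hωc, Complex.conj_conj]
  -- conjugate transpose equals adjugate
  have hadj : (!![a, b; c, d])ᴴ = (!![a, b; c, d]).adjugate := by
    have h1 : !![a, b; c, d] * (!![a, b; c, d]).adjugate = 1 := by
      rw [Matrix.mul_adjugate, hdet, one_smul]
    calc (!![a, b; c, d])ᴴ = (!![a, b; c, d])ᴴ * (!![a, b; c, d] * (!![a, b; c, d]).adjugate) := by
          rw [h1, mul_one]
      _ = ((!![a, b; c, d])ᴴ * !![a, b; c, d]) * (!![a, b; c, d]).adjugate := by rw [mul_assoc]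
      _ = (!![a, b; c, d]).adjugate := by rw [hu, one_mul]
  have hda : d = (starRingEnd ℂ) a := by
    have := congr_fun (congr_fun hadj 0) 0
    simpa [Matrix.conjTranspose_apply, Matrix.adjugate_fin_two] using this.symm
  have hcb : c = -(starRingEnd ℂ) b := by
    have := congr_fun (congr_fun hadj 1) 0
    simp [Matrix.conjTranspose_apply, Matrix.adjugate_fin_two] at this
    linear_combination this
  subst hda hcb
  -- the conjugated matrix
  have hmap : (!![a, b; -(starRingEnd ℂ) b, (starRingEnd ℂ) a]).map (starRingEnd ℂ)
      = !![(starRingEnd ℂ) a, (starRingEnd ℂ) b; -b, a] := by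
    ext i j; fin_cases i <;> fin_cases j <;> simp
  rw [hmap] at hc h
  -- determinant equation
  have hdet' : a * (starRingEnd ℂ) a + b * (starRingEnd ℂ) b = 1 := by
    rw [Matrix.det_fin_two_of] at hdet
    linear_combination hdet
  -- from hc : b is purely imaginary
  have hcc : a * (starRingEnd ℂ) a - b * b = 1 := by
    have := congr_fun (congr_fun hc 0) 0
    rw [Matrix.mul_fin_two] at this
    simp [Matrix.one_apply] at this
    linear_combination this
  have hbre : (starRingEnd ℂ) b + b = 0 := by
    have hbb : b * ((starRingEnd ℂ) b + b) = 0 := by linear_combination hdet' - hcc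
    rcases mul_eq_zero.mp hbb with h0 | h0
    · simp [h0]
    · exact h0
  -- the trace condition from h
  rw [sq, Matrix.mul_fin_two, Matrix.mul_fin_two] at h
  have e00 := congr_fun (congr_fun h 0) 0
  have e01 := congr_fun (congr_fun h 0) 1
  simp [Matrix.one_apply] at e00 e01
  have ht : ω * (starRingEnd ℂ) a + ω' * a = 0 := by
    have hat : (starRingEnd ℂ) a * (ω * (starRingEnd ℂ) a + ω' * a) = 0 := by
      have hkey : ω * ((starRingEnd ℂ) a * (ω * (starRingEnd ℂ) a + ω' * a)) = 0 := by
        linear_combination e00 + hcc - (b * b - a * (starRingEnd ℂ) a) * hωω'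
          + ω * ω' * b * hbre
      rcases mul_eq_zero.mp hkey with h0 | h0
      · exact absurd h0 (Complex.exp_ne_zero _)
      · exact h0
    have hbt : (starRingEnd ℂ) b * (ω * (starRingEnd ℂ) a + ω' * a) = 0 := by
      have hkey : ω * ((starRingEnd ℂ) b * (ω * (starRingEnd ℂ) a + ω' * a)) = 0 := by
        linear_combination e01
      rcases mul_eq_zero.mp hkey with h0 | h0
      · exact absurd h0 (Complex.exp_ne_zero _)
      · exact h0
    have hfin : (ω * (starRingEnd ℂ) a + ω' * a) * 1 = 0 := by
      rw [← hdet']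
      linear_combination a * hat + b * hbt
    simpa using hfin
  -- define α and β
  have key : ∀ z : ℂ, (starRingEnd ℂ) z + z = 0 → z = Complex.I * (z.im : ℂ) := by
    intro z hz
    have hre : z.re = 0 := by
      have := congr_arg Complex.re hz
      simp only [Complex.add_re, Complex.conj_re, Complex.zero_re] at this
      linarith
    apply Complex.ext <;> simp [hre]
  have hure : (starRingEnd ℂ) (ω' * a) + ω' * a = 0 := by
    rw [map_mul (starRingEnd ℂ), hωc']
    exact ht
  obtain ⟨β, hbval⟩ : ∃ β : ℝ, b = Complex.I * (β : ℂ) := ⟨_, key b hbre⟩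
  obtain ⟨γ, huval⟩ : ∃ γ : ℝ, ω' * a = Complex.I * (γ : ℂ) := ⟨_, key _ hure⟩
  have haval : a = Complex.I * (γ : ℂ) * ω := by
    calc a = ω * (ω' * a) := by rw [← mul_assoc, hωω', one_mul]
      _ = ω * (Complex.I * (γ : ℂ)) := by rw [huval]
      _ = Complex.I * (γ : ℂ) * ω := by ring
  have hconja : (starRingEnd ℂ) a = -Complex.I * (γ : ℂ) * ω' := by
    rw [haval, map_mul (starRingEnd ℂ), map_mul (starRingEnd ℂ), hωc]
    simp [Complex.conj_I]
  have hconjb : (starRingEnd ℂ) b = -Complex.I * (β : ℂ) := by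
    rw [hbval, map_mul (starRingEnd ℂ)]
    simp [Complex.conj_I]
  refine ⟨γ, β, ?_, ?_⟩
  · have hsum : ((γ : ℂ)) ^ 2 + ((β : ℂ)) ^ 2 = 1 := by
      rw [hconja, hconjb, haval, hbval] at hdet'
      linear_combination hdet' - (γ:ℂ)^2 * hωω' + ((γ:ℂ)^2*ω*ω' + (β:ℂ)^2) * Complex.I_sq
    have hcast : ((γ ^ 2 + β ^ 2 : ℝ) : ℂ) = ((1 : ℝ) : ℂ) := by
      push_cast
      linear_combination hsum
    exact_mod_cast hcast
  · ext i j
    fin_cases i <;> fin_cases j <;> simp [Matrix.smul_apply]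
    · rw [haval]; ring
    · exact hbval
    · rw [hconjb]; ring
    · rw [hconja]; ring
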